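/- Let n ≥ 1 and let m_1, …, m_n be integers with m_i ≥ 2 for all i. Then for every j with 1 ≤ j ≤ n one has det T(m_1, …, m_n) > (j·m_j − 2j + 1) · det T(m_{j+1}, …, m_n). (This is the inequality Δ(Γ) > (j·m_j − 2j + 1)·Δ(Γ∖\overline{v_1v_j}) established in the proof of Lemma 3.3.) -/

import Mathlib

/-- The determinant of the `n × n` tridiagonal integer matrix whose diagonal
entries are `m 1, …, m n` (so the `(i,i)` entry, `i : Fin n`, is `m (i+1)`),
whose entries immediately above and below the diagonal are all `-1`, and whose
other entries are `0`.  For `n = 0` this is `1` (determinant of the empty matrix). -/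
def tridiagDet (n : ℕ) (m : ℕ → ℤ) : ℤ :=
  Matrix.det (fun i j : Fin n =>
    if (i : ℕ) = (j : ℕ) then m ((i : ℕ) + 1)
    else if (i : ℕ) + 1 = (j : ℕ) ∨ (j : ℕ) + 1 = (i : ℕ) then -1 else 0)

lemma tridiag_rec (m : ℕ → ℤ) (k : ℕ) :
    tridiagDet (k+2) m
      = m 1 * tridiagDet (k+1) (fun i => m (1+i)) - tridiagDet k (fun i => m (2+i)) := by
  unfold tridiagDet
  erw [Matrix.det_succ_row_zero]
  rw [Fin.sum_univ_succ, Fin.sum_univ_succ]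
  simp only [Fin.val_succ, Fin.val_zero, Fin.isValue]
  norm_num
  have h1 : (Matrix.submatrix
      (fun i j : Fin (k+2) =>
        if (i:ℕ) = (j:ℕ) then m ((i:ℕ) + 1)
        else if (i:ℕ) + 1 = (j:ℕ) ∨ (j:ℕ) + 1 = (i:ℕ) then (-1:ℤ) else 0)
      Fin.succ Fin.succ)
      = (fun i j : Fin (k+1) =>
        if (i:ℕ) = (j:ℕ) then m (1 + ((i:ℕ) + 1))
        else if (i:ℕ) + 1 = (j:ℕ) ∨ (j:ℕ) + 1 = (i:ℕ) then (-1:ℤ) else 0) := by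
    funext i j
    simp only [Matrix.submatrix, Matrix.of_apply, Fin.val_succ]
    split_ifs <;> first | rfl | omega | (congr 1; omega)
  rw [h1]
  have h2 : (Matrix.submatrix
      (fun i j : Fin (k+2) =>
        if (i:ℕ) = (j:ℕ) then m ((i:ℕ) + 1)
        else if (i:ℕ) + 1 = (j:ℕ) ∨ (j:ℕ) + 1 = (i:ℕ) then (-1:ℤ) else 0)
      Fin.succ (Fin.succAbove (1 : Fin (k+2)))).det
      = - Matrix.det (fun i j : Fin k =>
        if (i:ℕ) = (j:ℕ) then m (2 + ((i:ℕ) + 1))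
        else if (i:ℕ) + 1 = (j:ℕ) ∨ (j:ℕ) + 1 = (i:ℕ) then (-1:ℤ) else 0) := by
    set M := (Matrix.submatrix
      (fun i j : Fin (k+2) =>
        if (i:ℕ) = (j:ℕ) then m ((i:ℕ) + 1)
        else if (i:ℕ) + 1 = (j:ℕ) ∨ (j:ℕ) + 1 = (i:ℕ) then (-1:ℤ) else 0)
      Fin.succ (Fin.succAbove (1 : Fin (k+2)))) with hM
    rw [Matrix.det_succ_column_zero, Fin.sum_univ_succ]
    have h0 : (Fin.succAbove (1 : Fin (k+2)) (0 : Fin (k+1))) = 0 := rfl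
    have hc0 : ∀ i : Fin k, M i.succ 0 = 0 := by
      intro i
      simp only [hM, Matrix.submatrix, Matrix.of_apply, h0, Fin.val_succ, Fin.val_zero]
      split_ifs <;> simp_all
    have hM00 : M 0 0 = -1 := by
      simp only [hM, Matrix.submatrix, Matrix.of_apply, h0, Fin.val_succ, Fin.val_zero]
      norm_num
    have hsa : ∀ j : Fin k, (Fin.succAbove (1 : Fin (k+2)) j.succ) = j.succ.succ := by
      intro j
      apply Fin.succAbove_of_le_castSucc
      simp [Fin.le_def]
    have hsub : (M.submatrix (Fin.succAbove (0 : Fin (k+1))) Fin.succ)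
        = (fun i j : Fin k =>
          if (i:ℕ) = (j:ℕ) then m (2 + ((i:ℕ) + 1))
          else if (i:ℕ) + 1 = (j:ℕ) ∨ (j:ℕ) + 1 = (i:ℕ) then (-1:ℤ) else 0) := by
      funext i j
      simp only [hM, Matrix.submatrix, Matrix.of_apply, Fin.succAbove_zero, hsa, Fin.val_succ]
      split_ifs <;> first | rfl | omega | (congr 1; omega)
    rw [Finset.sum_eq_zero (fun i _ => by rw [hc0 i]; ring)]
    rw [hM00, hsub]
    simp
  rw [h2]
  ring

lemma tridiagDet_zero (m : ℕ → ℤ) : tridiagDet 0 m = 1 := by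
  unfold tridiagDet
  exact Matrix.det_isEmpty

lemma tridiagDet_one (m : ℕ → ℤ) : tridiagDet 1 m = m 1 := by
  unfold tridiagDet
  exact Matrix.det_fin_one _

/-- `Dfun n m k` is `det T(m_{k+1}, …, m_n)`. -/
def Dfun (n : ℕ) (m : ℕ → ℤ) (k : ℕ) : ℤ := tridiagDet (n - k) (fun i => m (k + i))

lemma Dfun_rec (n : ℕ) (m : ℕ → ℤ) (k : ℕ) (hk : k + 2 ≤ n) :
    Dfun n m k = m (k+1) * Dfun n m (k+1) - Dfun n m (k+2) := by
  have h := tridiag_rec (fun i => m (k + i)) (n - (k + 2))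
  have e2 : n - (k+2) + 2 = n - k := by omega
  have e1 : n - (k+2) + 1 = n - (k+1) := by omega
  rw [e2, e1] at h
  have f1 : (fun i => (fun i => m (k+i)) (1 + i)) = (fun i => m ((k+1) + i)) := by
    funext i; show m (k + (1+i)) = m (k+1+i); congr 1; omega
  have f2 : (fun i => (fun i => m (k+i)) (2 + i)) = (fun i => m ((k+2) + i)) := by
    funext i; show m (k + (2+i)) = m (k+2+i); congr 1; omega
  rw [f1, f2] at h
  simpa [Dfun] using h

lemma Dfun_last (n : ℕ) (m : ℕ → ℤ) : Dfun n m n = 1 := by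
  simp [Dfun, tridiagDet_zero]

lemma Dfun_pred (n : ℕ) (m : ℕ → ℤ) (hn : 1 ≤ n) : Dfun n m (n-1) = m n := by
  have e : n - (n-1) = 1 := by omega
  rw [Dfun, e, tridiagDet_one]
  congr 1; omega

lemma Dfun_key (n : ℕ) (m : ℕ → ℤ) (hm : ∀ i, 1 ≤ i → i ≤ n → 2 ≤ m i) :
    ∀ t k, 1 ≤ k → k ≤ n → n - k = t →
      1 ≤ Dfun n m k ∧ (m k - 2) * Dfun n m k + 1 ≤ Dfun n m (k-1) - Dfun n m k := by
  intro t
  induction t with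
  | zero =>
    intro k hk1 hkn ht
    have hkn' : k = n := by omega
    subst hkn'
    have h1 := Dfun_last k m
    have h2 := Dfun_pred k m hk1
    have h3 := hm k hk1 le_rfl
    constructor
    · omega
    · rw [h1, h2]; linarith
  | succ t ih =>
    intro k hk1 hkn ht
    have hklt : k + 1 ≤ n := by omega
    obtain ⟨ih1, ih2⟩ := ih (k+1) (by omega) hklt (by omega)
    have hmk1 : 2 ≤ m (k+1) := hm (k+1) (by omega) hklt
    have hprod : 0 ≤ (m (k+1) - 2) * Dfun n m (k+1) := by
      apply mul_nonneg <;> linarith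
    -- D k - D (k+1) ≥ 1
    have hd1 : 1 ≤ Dfun n m k - Dfun n m (k+1) := by
      have : k + 1 - 1 = k := by omega
      rw [this] at ih2
      linarith
    have hDk : 1 ≤ Dfun n m k := by linarith
    refine ⟨hDk, ?_⟩
    have hrec : Dfun n m (k-1) = m k * Dfun n m k - Dfun n m (k+1) := by
      have h := Dfun_rec n m (k-1) (by omega)
      have e1 : k - 1 + 1 = k := by omega
      have e2 : k - 1 + 2 = k + 1 := by omega
      rw [e1, e2] at h
      exact h
    rw [hrec]
    nlinarith [hm k hk1 (by omega : k ≤ n)]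

lemma Dfun_mono (n : ℕ) (m : ℕ → ℤ) (hm : ∀ i, 1 ≤ i → i ≤ n → 2 ≤ m i)
    (k : ℕ) (hk1 : 1 ≤ k) (hkn : k + 1 ≤ n) :
    Dfun n m k - Dfun n m (k+1) ≤ Dfun n m (k-1) - Dfun n m k := by
  obtain ⟨hDk, -⟩ := Dfun_key n m hm (n - k) k hk1 (by omega) rfl
  have hmk : 2 ≤ m k := hm k hk1 (by omega)
  have hrec : Dfun n m (k-1) = m k * Dfun n m k - Dfun n m (k+1) := by
    have h := Dfun_rec n m (k-1) (by omega)
    have e1 : k - 1 + 1 = k := by omega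
    have e2 : k - 1 + 2 = k + 1 := by omega
    rw [e1, e2] at h
    exact h
  rw [hrec]
  nlinarith

lemma Dfun_sum (n : ℕ) (m : ℕ → ℤ) (hm : ∀ i, 1 ≤ i → i ≤ n → 2 ≤ m i) :
    ∀ j, 1 ≤ j → j ≤ n →
      (j : ℤ) * (Dfun n m (j-1) - Dfun n m j) ≤ Dfun n m 0 - Dfun n m j := by
  intro j
  induction j with
  | zero => intro h; omega
  | succ j ih =>
    intro _ hjn
    rcases Nat.eq_zero_or_pos j with hj0 | hj1
    · subst hj0; simp
    · have hIH := ih hj1 (by omega)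
      have hmono := Dfun_mono n m hm j hj1 hjn
      have e : j + 1 - 1 = j := by omega
      rw [e]
      push_cast
      have hj0 : (0:ℤ) ≤ (j:ℤ) := by positivity
      nlinarith

/-- The inequality `Δ(Γ) > (j·m_j − 2j + 1)·Δ(Γ∖\overline{v_1v_j})` from the proof of
Lemma 3.3: for a chain with weights `m_1, …, m_n`, each `m_i ≥ 2`, one has
`det T(m_1, …, m_n) > (j·m_j − 2j + 1) · det T(m_{j+1}, …, m_n)` for all `1 ≤ j ≤ n`. -/
theorem tridiagDet_gt_weighted (n : ℕ) (hn : 1 ≤ n) (m : ℕ → ℤ)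
    (hm : ∀ i, 1 ≤ i → i ≤ n → 2 ≤ m i) :
    ∀ j, 1 ≤ j → j ≤ n →
      tridiagDet n m >
        ((j : ℤ) * m j - 2 * (j : ℤ) + 1) * tridiagDet (n - j) (fun i => m (j + i)) := by
  intro j hj1 hjn
  obtain ⟨hDj, hdj⟩ := Dfun_key n m hm (n - j) j hj1 hjn rfl
  have hsum := Dfun_sum n m hm j hj1 hjn
  have hD0 : Dfun n m 0 = tridiagDet n m := by
    simp [Dfun]
  have hj0 : (1:ℤ) ≤ (j:ℤ) := by exact_mod_cast hj1
  have step : (j:ℤ) * ((m j - 2) * Dfun n m j + 1)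
      ≤ (j:ℤ) * (Dfun n m (j-1) - Dfun n m j) :=
    mul_le_mul_of_nonneg_left hdj (by linarith)
  rw [← hD0]
  show Dfun n m 0 > ((j : ℤ) * m j - 2 * (j : ℤ) + 1) * Dfun n m j
  nlinarith [hsum, step, hDj, hj0]
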